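/- Let A_ℓ(z) = ∑_{n≥0} A(n,ℓ)·zⁿ ∈ ℚ⟦z⟧ be the ordinary generating function of peakless Motzkin paths of height at most ℓ. Then A₀(z)·(1−z) = 1, and for every ℓ ≥ 1 one has the continued-fraction-type recursion (1 − z + z² − z²·A_{ℓ−1}(z))·A_ℓ(z) = 1 in ℚ⟦z⟧. -/

import Mathlib

/-- Steps of a Motzkin path: up, down, flat. -/
inductive Step : Type
  | U : Step
  | D : Step
  | F : Step
  deriving DecidableEq

instance : Fintype Step :=
  ⟨{Step.U, Step.D, Step.F}, fun x => by cases x <;> simp⟩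

/-- The value (vertical displacement) of a step. -/
def Step.val : Step → ℤ
  | .U => 1
  | .D => -1
  | .F => 0

/-- The partial sum of the first `i` step values of the word `w`. -/
def psum {n : ℕ} (w : Fin n → Step) (i : ℕ) : ℤ :=
  ∑ j : Fin n, if (j : ℕ) < i then (w j).val else 0

/-- A word is peakless if no up-step is immediately followed by a down-step. -/
def Peakless {n : ℕ} (w : Fin n → Step) : Prop :=
  ∀ i : ℕ, ∀ h : i + 1 < n,
    ¬(w ⟨i, Nat.lt_of_succ_lt h⟩ = Step.U ∧ w ⟨i + 1, h⟩ = Step.D)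

/-- `w` is a peakless Motzkin path from level `0` to level `k`:
all partial sums are nonnegative, the total sum is `k`, and there is no peak. -/
def IsPeaklessMotzkinTo {n : ℕ} (w : Fin n → Step) (k : ℤ) : Prop :=
  (∀ i : ℕ, 0 ≤ psum w i) ∧ psum w n = k ∧ Peakless w

/-- The height of a path: the maximum of its partial sums (0 for the empty path). -/
def height {n : ℕ} (w : Fin n → Step) : ℤ :=
  (Finset.range (n + 1)).sup' Finset.nonempty_range_add_one (psum w)

/-- `mTo n k`: the number of peakless Motzkin paths of length `n` from level `0` to level `k`. -/
noncomputable def mTo (n : ℕ) (k : ℤ) : ℕ :=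
  Nat.card {w : Fin n → Step // IsPeaklessMotzkinTo w k}

/-- `m n`: the number of peakless Motzkin paths of length `n`. -/
noncomputable def m (n : ℕ) : ℕ := mTo n 0

/-- `A n ℓ`: the number of peakless Motzkin paths of length `n` of height at most `ℓ`. -/
noncomputable def A (n ℓ : ℕ) : ℕ :=
  Nat.card {w : Fin n → Step // IsPeaklessMotzkinTo w 0 ∧ height w ≤ (ℓ : ℤ)}

/-- The ordinary generating function of peakless Motzkin paths of height at most `ℓ`. -/
noncomputable def Agf (ℓ : ℕ) : PowerSeries ℚ := PowerSeries.mk fun n => (A n ℓ : ℚ)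

/-! ### Auxiliary development: automaton on lists -/

/-- One step of the validity automaton: state is (level, was-the-last-step-an-up). -/
def stepF (L : ℤ) : ℤ × Bool → Step → Option (ℤ × Bool)
  | (a, _), Step.U => if a + 1 ≤ L then some (a + 1, true) else none
  | (a, u), Step.D => if 0 < a ∧ u = false then some (a - 1, false) else none
  | (a, _), Step.F => some (a, false)

/-- Run the automaton over a list of steps. -/
def run (L : ℤ) : ℤ × Bool → List Step → Option (ℤ × Bool)
  | s, [] => some s
  | s, x :: t => (stepF L s x).bind fun s' => run L s' t

/-- Level after `i` steps, starting at level `a`. -/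
def lv (a : ℤ) (l : List Step) (i : ℕ) : ℤ := a + ((l.take i).map Step.val).sum

/-- Peaklessness relative to an initial flag. -/
def NoPeak : Bool → List Step → Prop
  | _, [] => True
  | u, x :: t => ¬(u = true ∧ x = Step.D) ∧ NoPeak (x == Step.U) t

/-- `l` is a valid bounded peakless Motzkin path. -/
def ok (L : ℤ) (l : List Step) : Prop := run L (0, false) l = some (0, false)

instance (L : ℤ) : DecidablePred (ok L) := fun l => by unfold ok; infer_instance

lemma run_append (L : ℤ) (s : ℤ × Bool) (x y : List Step) :
    run L s (x ++ y) = (run L s x).bind fun t => run L t y := by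
  induction x generalizing s with
  | nil => simp [run]
  | cons a t ih =>
    simp only [List.cons_append, run]
    cases stepF L s a with
    | none => simp
    | some s' => simp [ih]

lemma run_level {L : ℤ} {s t : ℤ × Bool} {l : List Step} (h : run L s l = some t) :
    t.1 = s.1 + (l.map Step.val).sum := by
  induction l generalizing s with
  | nil => simp [run] at h; simp [h]
  | cons x r ih =>
    simp only [run] at h
    cases hs : stepF L s x with
    | none => rw [hs] at h; simp at h
    | some s' =>
      rw [hs] at h; simp only [Option.bind_some] at h
      have := ih h
      obtain ⟨a, u⟩ := s
      cases x <;> simp [stepF] at hs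
      · obtain ⟨h1, h2⟩ := hs; subst h2
        simp [Step.val] at this ⊢; omega
      · obtain ⟨h1, h2⟩ := hs; subst h2
        simp [Step.val] at this ⊢; omega
      · subst hs; simp [Step.val] at this ⊢; omega

lemma lv_zero (a : ℤ) (l : List Step) : lv a l 0 = a := by simp [lv]

lemma lv_cons (a : ℤ) (x : Step) (t : List Step) (i : ℕ) :
    lv a (x :: t) (i + 1) = lv (a + x.val) t i := by
  simp [lv]; ring

lemma lv_of_le (a : ℤ) (l : List Step) {i : ℕ} (h : l.length ≤ i) :
    lv a l i = a + (l.map Step.val).sum := by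
  rw [lv, List.take_of_length_le h]


lemma run_inv {L : ℤ} {s t : ℤ × Bool} {l : List Step}
    (hs : 0 ≤ s.1 ∧ (s.2 = true → 1 ≤ s.1)) (h : run L s l = some t) :
    0 ≤ t.1 ∧ (t.2 = true → 1 ≤ t.1) := by
  induction l generalizing s with
  | nil => simp [run] at h; exact h ▸ hs
  | cons x r ih =>
    simp only [run] at h
    cases hx : stepF L s x with
    | none => rw [hx] at h; simp at h
    | some s' =>
      rw [hx] at h; simp only [Option.bind_some] at h
      refine ih ?_ h
      obtain ⟨a, u⟩ := s
      obtain ⟨ha, _⟩ := hs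
      simp only at ha
      cases x <;> simp [stepF] at hx
      · obtain ⟨h1, h2⟩ := hx; rw [← h2]; constructor <;> simp <;> omega
      · obtain ⟨⟨h1, _⟩, h2⟩ := hx; rw [← h2]; constructor <;> simp <;> omega
      · rw [← hx]; constructor <;> simp <;> omega

lemma run_bounds {L a : ℤ} {u : Bool} {t : ℤ × Bool} {l : List Step}
    (h0 : 0 ≤ a) (hL : a ≤ L) (h : run L (a, u) l = some t) :
    ∀ i, 0 ≤ lv a l i ∧ lv a l i ≤ L := by
  induction l generalizing a u with
  | nil => intro i; simp [lv]; omega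
  | cons x r ih =>
    intro i
    match i with
    | 0 => simp [lv_zero]; omega
    | i + 1 =>
      rw [lv_cons]
      simp only [run] at h
      cases hx : stepF L (a, u) x with
      | none => rw [hx] at h; simp at h
      | some s' =>
        rw [hx] at h; simp only [Option.bind_some] at h
        cases x <;> simp [stepF] at hx
        · obtain ⟨h1, h2⟩ := hx; rw [← h2] at h
          have := ih (a := a + 1) (u := true) (by omega) h1 h i
          simpa [Step.val] using this
        · obtain ⟨⟨h1, hu⟩, h2⟩ := hx; rw [← h2] at h
          have := ih (a := a - 1) (u := false) (by omega) (by omega) h i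
          simpa [Step.val, sub_eq_add_neg] using this
        · rw [← hx] at h
          have := ih (a := a) (u := false) h0 hL h i
          simpa [Step.val] using this

lemma noPeak_of_run {L : ℤ} {s : ℤ × Bool} {t : ℤ × Bool} {l : List Step}
    (h : run L s l = some t) : NoPeak s.2 l := by
  induction l generalizing s with
  | nil => trivial
  | cons x r ih =>
    simp only [run] at h
    cases hx : stepF L s x with
    | none => rw [hx] at h; simp at h
    | some s' =>
      rw [hx] at h; simp only [Option.bind_some] at h
      have hrec := ih h
      obtain ⟨a, u⟩ := s
      cases x <;> simp [stepF] at hx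
      · obtain ⟨h1, h2⟩ := hx; rw [← h2] at hrec
        exact ⟨by simp, by simpa using hrec⟩
      · obtain ⟨⟨h1, hu⟩, h2⟩ := hx; rw [← h2] at hrec
        exact ⟨by simp [hu], by simpa [show (Step.D == Step.U) = false from rfl] using hrec⟩
      · rw [← hx] at hrec
        exact ⟨by simp, by simpa [show (Step.F == Step.U) = false from rfl] using hrec⟩

lemma run_isSome_of {L a : ℤ} {u : Bool} {l : List Step}
    (hb : ∀ i, 0 ≤ lv a l i ∧ lv a l i ≤ L) (hp : NoPeak u l) :
    (run L (a, u) l).isSome := by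
  induction l generalizing a u with
  | nil => simp [run]
  | cons x r ih =>
    obtain ⟨hp1, hp2⟩ := hp
    have h1 := hb 1
    rw [show (1 : ℕ) = 0 + 1 from rfl, lv_cons, lv_zero] at h1
    cases x with
    | U =>
      have hg : a + 1 ≤ L := by simpa [Step.val] using h1.2
      have := ih (a := a + 1) (u := true)
        (fun i => by have := hb (i + 1); rwa [lv_cons] at this; ) (by simpa using hp2)
      simp only [run, stepF, if_pos hg, Option.bind_some]
      simpa [Step.val] using this
    | D =>
      have hg : 0 < a := by have := h1.1; simp [Step.val] at this; omega
      have hu : u = false := by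
        cases u
        · rfl
        · exact absurd ⟨rfl, rfl⟩ hp1
      have := ih (a := a - 1) (u := false)
        (fun i => by have := hb (i + 1); rwa [lv_cons] at this) (by simpa [show (Step.D == Step.U) = false from rfl] using hp2)
      subst hu
      simp [run, stepF, hg, this]
    | F =>
      have := ih (a := a) (u := false)
        (fun i => by have := hb (i + 1); rw [lv_cons] at this; simpa [Step.val] using this)
        (by simpa [show (Step.F == Step.U) = false from rfl] using hp2)
      simp only [run, stepF, Option.bind_some]
      simpa [Step.val] using this

lemma run_flag_irrel {L a : ℤ} {u u' : Bool} {x : Step} {r : List Step} (hx : x ≠ Step.D) :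
    run L (a, u) (x :: r) = run L (a, u') (x :: r) := by
  cases x
  · simp [run, stepF]
  · exact absurd rfl hx
  · simp [run, stepF]

lemma run_shift_up {L a : ℤ} {u : Bool} {t : ℤ × Bool} {l : List Step}
    (h : run L (a, u) l = some t) :
    run (L + 1) (a + 1, u) l = some (t.1 + 1, t.2) := by
  induction l generalizing a u with
  | nil => simp [run] at h ⊢; simp [← h]
  | cons x r ih =>
    simp only [run] at h ⊢
    cases hx : stepF L (a, u) x with
    | none => rw [hx] at h; simp at h
    | some s' =>
      rw [hx] at h; simp only [Option.bind_some] at h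
      cases x <;> simp [stepF] at hx ⊢
      · obtain ⟨h1, h2⟩ := hx; rw [← h2] at h
        rw [if_pos (by omega)]
        simpa [show a + 1 + 1 = a + 1 + 1 from rfl] using ih h
      · obtain ⟨⟨h1, hu⟩, h2⟩ := hx; rw [← h2] at h
        rw [if_pos (by exact ⟨by omega, hu⟩)]
        have := ih h
        simpa [show a - 1 + 1 = a + 1 - 1 by ring] using this
      · rw [← hx] at h
        exact ih h

lemma run_shift_down {L a : ℤ} {u : Bool} {t : ℤ × Bool} {l : List Step}
    (hlv : ∀ i, 1 ≤ lv (a + 1) l i)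
    (h : run (L + 1) (a + 1, u) l = some t) :
    run L (a, u) l = some (t.1 - 1, t.2) := by
  induction l generalizing a u with
  | nil => simp [run] at h ⊢; simp [← h]
  | cons x r ih =>
    simp only [run] at h ⊢
    cases hx : stepF (L + 1) (a + 1, u) x with
    | none => rw [hx] at h; simp at h
    | some s' =>
      rw [hx] at h; simp only [Option.bind_some] at h
      cases x <;> simp [stepF] at hx ⊢
      · obtain ⟨h1, h2⟩ := hx; rw [← h2] at h
        rw [if_pos (by omega)]
        have := ih (a := a + 1)
          (fun i => by have := hlv (i + 1); rw [lv_cons] at this; simpa [Step.val] using this)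
          (by simpa [show a + 1 + 1 = a + 1 + 1 from rfl] using h)
        exact this
      · obtain ⟨⟨h1, hu⟩, h2⟩ := hx; rw [← h2] at h
        have ha : 1 ≤ a := by
          have := hlv 1
          rw [show (1 : ℕ) = 0 + 1 from rfl, lv_cons, lv_zero] at this
          simp [Step.val] at this; omega
        rw [if_pos (by exact ⟨by omega, hu⟩)]
        have := ih (a := a - 1)
          (fun i => by have := hlv (i + 1); rw [lv_cons] at this;
                       simpa [Step.val, show a - 1 + 1 = a + 1 + -1 by ring] using this)
          (by simpa [show a - 1 + 1 = a + 1 - 1 by ring] using h)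
        exact this
      · rw [← hx] at h
        exact ih (a := a)
          (fun i => by have := hlv (i + 1); rw [lv_cons] at this; simpa [Step.val] using this) h


lemma psum_eq {n : ℕ} (w : Fin n → Step) (i : ℕ) :
    psum w i = lv 0 (List.ofFn w) i := by
  rw [psum, lv, List.map_take, List.map_ofFn, zero_add, List.sum_take_ofFn]
  rw [Finset.sum_filter]
  rfl

lemma noPeak_iff_chain' (u : Bool) (l : List Step) :
    NoPeak u l ↔ (∀ y ∈ l.head?, ¬(u = true ∧ y = Step.D)) ∧
      l.Chain' (fun a b => ¬(a = Step.U ∧ b = Step.D)) := by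
  induction l generalizing u with
  | nil => simp [NoPeak, List.Chain']
  | cons x r ih =>
    simp only [List.Chain'] at ih ⊢
    rw [List.isChain_cons]
    constructor
    · rintro ⟨h1, h2⟩
      rw [ih] at h2
      refine ⟨by simpa using h1, fun y hy => ?_, h2.2⟩
      have := h2.1 y hy
      rintro ⟨hxu, hyD⟩
      exact this ⟨by simp [hxu], hyD⟩
    · rintro ⟨h1, h2, h3⟩
      refine ⟨by simpa using h1, ?_⟩
      rw [ih]
      refine ⟨fun y hy => ?_, h3⟩
      rintro ⟨hxu, hyD⟩
      simp only [beq_iff_eq] at hxu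
      exact h2 y hy ⟨hxu, hyD⟩

lemma peakless_iff_chain' {n : ℕ} (w : Fin n → Step) :
    Peakless w ↔ (List.ofFn w).Chain' (fun a b => ¬(a = Step.U ∧ b = Step.D)) := by
  rw [List.Chain', List.isChain_iff_getElem]
  constructor
  · intro hp i h
    simp only [List.length_ofFn] at h
    simp only [List.getElem_ofFn]
    exact hp i (by omega)
  · intro hc i h
    have := hc i (by simp only [List.length_ofFn]; omega)
    rw [List.getElem_ofFn, List.getElem_ofFn] at this
    exact this

lemma bridge {n : ℕ} (w : Fin n → Step) {L : ℤ} (hL : 0 ≤ L) :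
    (IsPeaklessMotzkinTo w 0 ∧ height w ≤ L) ↔ ok L (List.ofFn w) := by
  have hlen : (List.ofFn w).length = n := List.length_ofFn (f := w)
  constructor
  · rintro ⟨⟨hnn, hsum, hpk⟩, hht⟩
    have hb : ∀ i, 0 ≤ lv 0 (List.ofFn w) i ∧ lv 0 (List.ofFn w) i ≤ L := by
      intro i
      rw [← psum_eq]
      refine ⟨hnn i, ?_⟩
      rcases le_or_gt i n with hi | hi
      · refine le_trans ?_ hht
        exact Finset.le_sup' (psum w) (Finset.mem_range.2 (by omega))
      · have : psum w i = psum w n := by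
          rw [psum_eq, psum_eq, lv_of_le _ _ (by omega), lv_of_le _ _ (by omega)]
        rw [this]
        refine le_trans ?_ hht
        exact Finset.le_sup' (psum w) (Finset.mem_range.2 (by omega))
    have hnp : NoPeak false (List.ofFn w) := by
      rw [noPeak_iff_chain']
      exact ⟨by simp, (peakless_iff_chain' w).1 hpk⟩
    have hsome := run_isSome_of (L := L) (a := 0) (u := false) hb hnp
    obtain ⟨t, ht⟩ := Option.isSome_iff_exists.1 hsome
    have h1 : t.1 = 0 := by
      have hr := run_level ht
      simp only at hr
      have h2 : psum w n = (List.map Step.val (List.ofFn w)).sum := by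
        rw [psum_eq, lv, List.take_of_length_le (le_of_eq hlen), zero_add]
      rw [hsum] at h2
      omega
    have h2 : t.2 = false := by
      have := run_inv (s := ((0 : ℤ), false)) (by simp) ht
      cases h : t.2
      · rfl
      · exact absurd (h1 ▸ this.2 h) (by norm_num)
    rw [ok, ht, ← h1, ← h2]
  · intro hok
    have hb := run_bounds (le_refl (0:ℤ)) hL hok
    have hnn : ∀ i, 0 ≤ psum w i := fun i => by rw [psum_eq]; exact (hb i).1
    have hsum : psum w n = 0 := by
      have hr := run_level hok
      simp only at hr
      rw [psum_eq, lv, List.take_of_length_le (le_of_eq hlen)]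
      omega
    have hpk : Peakless w := by
      rw [peakless_iff_chain']
      have := noPeak_of_run hok
      exact ((noPeak_iff_chain' _ _).1 this).2
    refine ⟨⟨hnn, hsum, hpk⟩, ?_⟩
    rw [height, Finset.sup'_le_iff]
    intro i _
    rw [psum_eq]
    exact (hb i).2

/-- All lists of steps of a given length, as a finset. -/
def LL : ℕ → Finset (List Step)
  | 0 => {[]}
  | n + 1 => Finset.univ.biUnion fun s : Step => (LL n).image (s :: ·)

lemma mem_LL {n : ℕ} {l : List Step} : l ∈ LL n ↔ l.length = n := by
  induction n generalizing l with
  | zero => cases l <;> simp [LL]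
  | succ n ih =>
    cases l with
    | nil => simp [LL]
    | cons x r => simp [LL, ih]

/-- Valid paths of length `n`, bounded by `L`. -/
def paths (L : ℤ) (n : ℕ) : Finset (List Step) := (LL n).filter (ok L)

/-- The number of valid paths of length `n`, bounded by `L`. -/
def N (L : ℤ) (n : ℕ) : ℕ := (paths L n).card

lemma mem_paths {L : ℤ} {n : ℕ} {l : List Step} :
    l ∈ paths L n ↔ l.length = n ∧ ok L l := by
  simp [paths, mem_LL]

lemma A_eq_N (n ℓ : ℕ) : A n ℓ = N (ℓ : ℤ) n := by
  classical
  rw [A, Nat.card_congr (Equiv.subtypeEquivRight (fun w => bridge w (by positivity)))]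
  rw [Nat.card_eq_fintype_card, Fintype.card_subtype]
  rw [N, paths]
  apply Finset.card_bij (fun w _ => List.ofFn w)
  · intro w hw
    simp only [Finset.mem_filter] at hw ⊢
    exact ⟨mem_LL.2 (List.length_ofFn (f := w)), hw.2⟩
  · intro w₁ _ w₂ _ h
    exact List.ofFn_injective h
  · intro l hl
    simp only [Finset.mem_filter, mem_LL] at hl
    obtain ⟨hlen, hok⟩ := hl
    subst hlen
    exact ⟨l.get, by simp [hok], List.ofFn_get l⟩


lemma ok_nil (L : ℤ) : ok L [] := rfl

lemma paths_zero (L : ℤ) : paths L 0 = {[]} := by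
  ext l
  simp only [mem_paths, Finset.mem_singleton, List.length_eq_zero_iff]
  constructor
  · rintro ⟨h, _⟩; exact h
  · rintro rfl; exact ⟨rfl, ok_nil L⟩

lemma N_zero (L : ℤ) : N L 0 = 1 := by rw [N, paths_zero]; rfl

lemma paths_one (L : ℤ) : paths L 1 = {[Step.F]} := by
  ext l
  simp only [mem_paths, Finset.mem_singleton, List.length_eq_one_iff]
  constructor
  · rintro ⟨⟨x, rfl⟩, hok⟩
    cases x
    · rw [ok] at hok
      simp only [run, stepF] at hok
      split_ifs at hok <;> simp_all
    · rw [ok] at hok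
      simp only [run, stepF] at hok
      split_ifs at hok <;> simp_all
    · rfl
  · rintro rfl
    refine ⟨⟨Step.F, rfl⟩, ?_⟩
    rw [ok]; simp [run, stepF]

lemma N_one (L : ℤ) : N L 1 = 1 := by rw [N, paths_one]; rfl

lemma paths_bot (n : ℕ) : paths 0 n = {List.replicate n Step.F} := by
  induction n with
  | zero => simpa using paths_zero 0
  | succ n ih =>
    ext l
    simp only [mem_paths, Finset.mem_singleton]
    constructor
    · rintro ⟨hlen, hok⟩
      cases l with
      | nil => simp at hlen
      | cons x r =>
        cases x
        · rw [ok] at hok; simp [run, stepF] at hok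
        · rw [ok] at hok; simp [run, stepF] at hok
        · have hr : r ∈ paths 0 n := by
            rw [mem_paths]
            refine ⟨by simpa using hlen, ?_⟩
            rw [ok] at hok ⊢
            simpa [run, stepF] using hok
          rw [ih, Finset.mem_singleton] at hr
          rw [hr, List.replicate_succ]
    · rintro rfl
      refine ⟨by simp, ?_⟩
      have : List.replicate n Step.F ∈ paths 0 n := by rw [ih]; simp
      rw [mem_paths] at this
      rw [List.replicate_succ, ok]
      simpa [run, stepF, ok] using this.2

lemma N_bot (n : ℕ) : N 0 n = 1 := by rw [N, paths_bot]; rfl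

/-- Arches of length `j`: up step, a nonempty path bounded by `L - 1`, down step. -/
def AS (L : ℤ) (j : ℕ) : Finset (List Step) :=
  ((paths (L - 1) (j - 2)).filter (fun w => w ≠ [])).image
    (fun w => Step.U :: (w ++ [Step.D]))

lemma card_AS (L : ℤ) {j : ℕ} (hj : 2 ≤ j) :
    (AS L j).card = N (L - 1) (j - 2) - (if j = 2 then 1 else 0) := by
  rw [AS, Finset.card_image_of_injective _ ?inj]
  case inj =>
    intro w₁ w₂ h
    simpa using h
  by_cases h2 : j = 2
  · subst h2
    rw [if_pos rfl, show (2 : ℕ) - 2 = 0 from rfl, paths_zero, N_zero]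
    simp [Finset.filter_singleton]
  · rw [if_neg h2, Nat.sub_zero, N]
    congr 1
    apply Finset.filter_true_of_mem
    intro w hw
    rw [mem_paths] at hw
    intro hnil
    rw [hnil] at hw
    simp at hw
    omega

lemma head_ne_D_of_run {L a : ℤ} {u : Bool} {t : ℤ × Bool} {r : List Step}
    (ha : a ≤ 0) (h : run L (a, u) (Step.D :: r) = some t) : False := by
  simp only [run, stepF] at h
  rw [if_neg (fun hc => absurd hc.1 (by omega))] at h
  simp at h


lemma lv_append_left {x y : List Step} (a : ℤ) {i : ℕ} (h : i ≤ x.length) :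
    lv a (x ++ y) i = lv a x i := by
  rw [lv, lv, List.take_append_of_le_length h]

lemma lv_one (w : List Step) (i : ℕ) : lv 1 w i = lv 0 w i + 1 := by simp [lv]; ring

lemma arch_spec {L : ℤ} (hL : 1 ≤ L) {j : ℕ} {a : List Step} (ha : a ∈ AS L j) :
    run L (0, false) a = some (0, false) ∧ a.length = j ∧
      (∀ i, 1 ≤ i → i < j → 1 ≤ lv 0 a i) ∧ lv 0 a j = 0 := by
  rw [AS, Finset.mem_image] at ha
  obtain ⟨w, hw, rfl⟩ := ha
  rw [Finset.mem_filter, mem_paths] at hw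
  obtain ⟨⟨hwlen, hwok⟩, hwne⟩ := hw
  have hwpos : 1 ≤ w.length := List.length_pos_iff.2 hwne
  have hj : 3 ≤ j := by omega
  have hwb := run_bounds (le_refl (0 : ℤ)) (by omega : (0:ℤ) ≤ L - 1) hwok
  have h1 : run L (1, false) w = some (1, false) := by
    have := run_shift_up (L := L - 1) (a := 0) hwok
    simpa using this
  have h2 : run L (1, true) w = some (1, false) := by
    obtain ⟨x, tw, rfl⟩ : ∃ x tw, w = x :: tw := by
      cases w
      · simp at hwne
      · exact ⟨_, _, rfl⟩
    have hxD : x ≠ Step.D := by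
      rintro rfl
      exact head_ne_D_of_run (le_refl 0) hwok
    rw [run_flag_irrel hxD]
    exact h1
  have hrun : run L (0, false) (Step.U :: (w ++ [Step.D])) = some (0, false) := by
    have hstep : stepF L (0, false) Step.U = some (1, true) := by
      simp only [stepF, zero_add]
      rw [if_pos hL]
    simp only [run, hstep, Option.bind_some]
    rw [run_append, h2]
    simp [run, stepF]
  have hlen : (Step.U :: (w ++ [Step.D])).length = j := by
    simp only [List.length_cons, List.length_append, List.length_nil]
    omega
  refine ⟨hrun, hlen, ?_, ?_⟩
  · intro i hi1 hij
    obtain ⟨i', rfl⟩ : ∃ i', i = i' + 1 := ⟨i - 1, by omega⟩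
    rw [lv_cons]
    have hi'w : i' ≤ w.length := by
      simp only [List.length_cons, List.length_append, List.length_nil] at hlen
      omega
    rw [show (0 : ℤ) + Step.val Step.U = 1 from rfl, lv_append_left _ hi'w, lv_one]
    have := (hwb i').1
    omega
  · rw [← hlen, lv_of_le _ _ (le_refl _)]
    have := run_level hrun
    simp only at this
    omega

lemma arch_mem_paths {L : ℤ} (hL : 1 ≤ L) {j : ℕ} {a : List Step} (ha : a ∈ AS L j) :
    a ∈ paths L j := by
  obtain ⟨h1, h2, _⟩ := arch_spec hL ha
  exact mem_paths.2 ⟨h2, h1⟩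


lemma run_cons_F {L : ℤ} {l : List Step} :
    run L (0, false) (Step.F :: l) = run L (0, false) l := by
  simp [run, stepF]

lemma paths_decomp (L : ℤ) (hL : 1 ≤ L) (n : ℕ) (hn : 1 ≤ n) :
    paths L n = ((paths L (n - 1)).image (Step.F :: ·)) ∪
      (Finset.Icc 2 n).biUnion
        (fun j => ((AS L j) ×ˢ (paths L (n - j))).image (fun p => p.1 ++ p.2)) := by
  ext l
  simp only [Finset.mem_union, Finset.mem_image, Finset.mem_biUnion, Finset.mem_Icc,
    Finset.mem_product, Prod.exists]
  constructor
  · intro hl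
    obtain ⟨hlen, hok⟩ := mem_paths.1 hl
    cases l with
    | nil => simp at hlen; omega
    | cons x₀ r =>
      cases x₀ with
      | F =>
        left
        refine ⟨r, mem_paths.2 ⟨by simp at hlen; omega, ?_⟩, rfl⟩
        rw [ok] at hok ⊢
        rwa [run_cons_F] at hok
      | D => exact absurd hok (fun h => head_ne_D_of_run (le_refl 0) h)
      | U =>
        right
        set l : List Step := Step.U :: r with hldef
        have hok' : run L (0, false) l = some (0, false) := hok
        have hb := run_bounds (le_refl (0:ℤ)) (by omega : (0:ℤ) ≤ L) hok'
        have hlvn : lv 0 l n = 0 := by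
          rw [← hlen, lv_of_le _ _ (le_refl _)]
          have := run_level hok'
          simp only at this
          omega
        have hex : ∃ i, 1 ≤ i ∧ i ≤ n ∧ lv 0 l i = 0 := ⟨n, hn, le_refl n, hlvn⟩
        obtain ⟨j, ⟨hj1, hjn, hj0⟩, hjmin⟩ :
            ∃ j, (1 ≤ j ∧ j ≤ n ∧ lv 0 l j = 0) ∧
              ∀ i, i < j → ¬(1 ≤ i ∧ i ≤ n ∧ lv 0 l i = 0) :=
          ⟨Nat.find hex, Nat.find_spec hex, fun i hi => Nat.find_min hex hi⟩
        have hint : ∀ i, 1 ≤ i → i < j → 1 ≤ lv 0 l i := by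
          intro i h1 h2
          have hm := hjmin i h2
          have hnn := (hb i).1
          by_contra hc
          push_neg at hc
          exact hm ⟨h1, by omega, by omega⟩
        have hj2 : 2 ≤ j := by
          rcases Nat.lt_or_ge j 2 with h | h
          · exfalso
            have hj1' : j = 1 := by omega
            rw [hj1'] at hj0
            rw [show (1:ℕ) = 0 + 1 from rfl, hldef, lv_cons, lv_zero] at hj0
            simp [Step.val] at hj0
          · exact h
        -- split l = x ++ y at the first return j
        set x : List Step := l.take j with hxdef
        set y : List Step := l.drop j with hydef
        have hxy : x ++ y = l := List.take_append_drop j l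
        have hxlen : x.length = j := by
          rw [hxdef, List.length_take]
          omega
        have hsplit := run_append L (0, false) x y
        rw [hxy, hok'] at hsplit
        cases hrx : run L (0, false) x with
        | none => rw [hrx] at hsplit; simp at hsplit
        | some s =>
          rw [hrx] at hsplit
          simp only [Option.bind_some] at hsplit
          have hry : run L s y = some (0, false) := hsplit.symm
          have hs1 : s.1 = 0 := by
            have hrl := run_level hrx
            have h0 := hj0
            rw [lv] at h0
            simp only at hrl
            rw [hxdef] at hrl
            omega
          have hs2 : s.2 = false := by
            have := run_inv (s := ((0:ℤ), false)) (by simp) hrx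
            cases hv : s.2
            · rfl
            · have := this.2 hv
              omega
          have hs : s = (0, false) := by
            obtain ⟨a, b⟩ := s
            simp only at hs1 hs2
            rw [hs1, hs2]
          rw [hs] at hry hrx
          have hy_mem : y ∈ paths L (n - j) := by
            refine mem_paths.2 ⟨?_, hry⟩
            rw [hydef, List.length_drop, hlen]
          -- structure of x
          have hxc : x = Step.U :: r.take (j - 1) := by
            rw [hxdef, hldef, show j = (j - 1) + 1 by omega, List.take_succ_cons]
            simp
          set tx : List Step := r.take (j - 1) with htxdef
          have htxlen : tx.length = j - 1 := by
            rw [htxdef, List.length_take]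
            have : r.length = n - 1 := by simp [hldef] at hlen; omega
            omega
          have htxne : tx ≠ [] := by
            intro h
            rw [h] at htxlen
            simp at htxlen
            omega
          obtain ⟨w, z, htx⟩ : ∃ w z, w ++ [z] = tx :=
            ⟨tx.dropLast, tx.getLast htxne, List.dropLast_append_getLast htxne⟩
          have hwlen : w.length = j - 2 := by
            have := congrArg List.length htx
            simp only [List.length_append, List.length_cons, List.length_nil] at this
            omega
          have hstep : stepF L (0, false) Step.U = some (1, true) := by
            simp only [stepF, zero_add]
            rw [if_pos hL]
          have hrtx : run L (1, true) tx = some (0, false) := by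
            rw [hxc] at hrx
            simp only [run, hstep, Option.bind_some] at hrx
            exact hrx
          rw [← htx, run_append] at hrtx
          cases hm : run L (1, true) w with
          | none => rw [hm] at hrtx; simp at hrtx
          | some m =>
            rw [hm] at hrtx
            simp only [Option.bind_some] at hrtx
            have hmz : stepF L m z = some (0, false) := by
              simp only [run] at hrtx
              cases hs' : stepF L m z with
              | none => rw [hs'] at hrtx; simp at hrtx
              | some s' =>
                rw [hs'] at hrtx
                simp only [Option.bind_some, run, Option.some_inj] at hrtx
                rw [hrtx]
            have hkey : ∀ i ≤ w.length, lv 0 l (i + 1) = lv 1 w i := by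
              intro i hi
              have h1 : lv 0 l (i + 1) = lv 0 x (i + 1) := by
                rw [← hxy, lv_append_left]
                omega
              rw [h1, hxc, ← htx, lv_cons,
                show (0 : ℤ) + Step.val Step.U = 1 from rfl, lv_append_left _ hi]
            have hm1 : m.1 = lv 0 l (j - 1) := by
              have hrl := run_level hm
              simp only at hrl
              have h2 : lv 1 w w.length = 1 + (w.map Step.val).sum := by
                rw [lv_of_le _ _ (le_refl _)]
              rw [show j - 1 = w.length + 1 by omega, hkey w.length (le_refl _), h2]
              omega
            have hm1ge : 1 ≤ m.1 := by
              rw [hm1]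
              exact hint (j - 1) (by omega) (by omega)
            have hzD : z = Step.D ∧ m.1 = 1 ∧ m.2 = false := by
              cases z with
              | U =>
                exfalso
                simp only [stepF] at hmz
                obtain ⟨a, b⟩ := m
                split_ifs at hmz <;> simp at hmz
              | F =>
                exfalso
                obtain ⟨a, b⟩ := m
                simp only [stepF] at hmz
                simp at hmz
                simp only at hm1ge
                omega
              | D =>
                obtain ⟨a, b⟩ := m
                simp only [stepF] at hmz
                split_ifs at hmz with hg
                simp only [Option.some_inj, Prod.mk.injEq] at hmz
                simp only at hm1ge
                exact ⟨rfl, by omega, hg.2⟩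
            obtain ⟨hzD', hm1', hm2'⟩ := hzD
            have hmval : m = (1, false) := by
              obtain ⟨a, b⟩ := m
              simp only at hm1' hm2'
              rw [hm1', hm2']
            rw [hmval] at hm
            have hwne : w ≠ [] := by
              intro h
              rw [h] at hm
              simp [run] at hm
            have hrw : run L (1, false) w = some (1, false) := by
              cases w with
              | nil => exact absurd rfl hwne
              | cons wx wr =>
                have hwxD : wx ≠ Step.D := by
                  rintro rfl
                  simp [run, stepF] at hm
                rw [← run_flag_irrel hwxD]
                exact hm
            have hlvw : ∀ i, 1 ≤ lv (0 + 1) w i := by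
              intro i
              rcases le_or_gt i w.length with hi | hi
              · rw [zero_add, ← hkey i hi]
                exact hint (i + 1) (by omega) (by omega)
              · rw [zero_add, lv_of_le _ _ (by omega), ← lv_of_le _ _ (le_refl w.length),
                  ← hkey w.length (le_refl _)]
                exact hint (w.length + 1) (by omega) (by omega)
            have hrw' : run (L - 1) (0, false) w = some (0, false) := by
              have := run_shift_down (L := L - 1) (a := 0) (u := false) hlvw
                (t := ((1 : ℤ), false)) ?_
              · simpa using this
              · rw [zero_add, show L - 1 + 1 = L by ring]
                exact hrw
            have hw_mem : w ∈ paths (L - 1) (j - 2) := mem_paths.2 ⟨hwlen, hrw'⟩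
            have hxAS : x ∈ AS L j := by
              rw [AS, Finset.mem_image]
              refine ⟨w, Finset.mem_filter.2 ⟨hw_mem, hwne⟩, ?_⟩
              rw [hxc, ← htx, hzD']
            exact ⟨j, ⟨hj2, hjn⟩, x, y, ⟨hxAS, hy_mem⟩, hxy⟩
  · rintro (⟨v, hv, rfl⟩ | ⟨j, ⟨hj2, hjn⟩, a, v, ⟨haAS, hv⟩, rfl⟩)
    · obtain ⟨hvlen, hvok⟩ := mem_paths.1 hv
      refine mem_paths.2 ⟨by simp [hvlen]; omega, ?_⟩
      rw [ok] at hvok ⊢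
      rwa [run_cons_F]
    · obtain ⟨hvlen, hvok⟩ := mem_paths.1 hv
      obtain ⟨harun, halen, _⟩ := arch_spec hL haAS
      refine mem_paths.2 ⟨by simp [hvlen, halen]; omega, ?_⟩
      rw [ok, run_append, harun]
      simpa [ok] using hvok


lemma mem_AS_head {L : ℤ} {j : ℕ} {a : List Step} (ha : a ∈ AS L j) :
    ∃ w', a = Step.U :: w' := by
  rw [AS, Finset.mem_image] at ha
  obtain ⟨w, _, rfl⟩ := ha
  exact ⟨_, rfl⟩

lemma arch_concat_lv {L : ℤ} (hL : 1 ≤ L) {j : ℕ} {a v : List Step} (ha : a ∈ AS L j) :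
    lv 0 (a ++ v) j = 0 ∧ ∀ i, 1 ≤ i → i < j → lv 0 (a ++ v) i ≠ 0 := by
  obtain ⟨_, halen, hint, hzero⟩ := arch_spec hL ha
  constructor
  · rw [lv_append_left _ (le_of_eq halen.symm)]
    exact hzero
  · intro i h1 h2
    rw [lv_append_left _ (by omega : i ≤ a.length)]
    have := hint i h1 h2
    omega

lemma N_rec' (L : ℤ) (hL : 1 ≤ L) {n : ℕ} (hn : 1 ≤ n) :
    N L n = N L (n - 1) + ∑ j ∈ Finset.Icc 2 n, (AS L j).card * N L (n - j) := by
  rw [N, paths_decomp L hL n hn, Finset.card_union_of_disjoint, Finset.card_image_of_injective,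
    Finset.card_biUnion]
  · congr 1
    apply Finset.sum_congr rfl
    intro j hj
    rw [Finset.mem_Icc] at hj
    rw [Finset.card_image_of_injOn, Finset.card_product, N]
    intro p hp q hq hpq
    rw [Finset.mem_coe, Finset.mem_product] at hp hq
    simp only at hpq
    have hplen : p.1.length = j := (arch_spec hL hp.1).2.1
    have hqlen : q.1.length = j := (arch_spec hL hq.1).2.1
    have := List.append_inj hpq (by omega)
    exact Prod.ext this.1 this.2
  · -- pairwise disjoint
    intro j₁ hj₁ j₂ hj₂ hne
    rw [Finset.mem_coe, Finset.mem_Icc] at hj₁ hj₂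
    rw [Function.onFun, Finset.disjoint_left]
    intro l h1 h2
    rw [Finset.mem_image] at h1 h2
    obtain ⟨p, hp, hpl⟩ := h1
    obtain ⟨q, hq, hql⟩ := h2
    rw [Finset.mem_product] at hp hq
    have c1 := arch_concat_lv hL (v := p.2) hp.1
    have c2 := arch_concat_lv hL (v := q.2) hq.1
    rw [hpl] at c1
    rw [hql] at c2
    rcases Nat.lt_or_ge j₁ j₂ with h | h
    · exact c2.2 j₁ (by omega) h c1.1
    · have : j₂ < j₁ := by omega
      exact c1.2 j₂ (by omega) this c2.1
  · exact fun a b h => by simpa using h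
  · -- disjoint F-image and biUnion
    rw [Finset.disjoint_left]
    intro l h1 h2
    rw [Finset.mem_image] at h1
    obtain ⟨v, _, hvl⟩ := h1
    rw [Finset.mem_biUnion] at h2
    obtain ⟨j, _, h2⟩ := h2
    rw [Finset.mem_image] at h2
    obtain ⟨p, hp, hpl⟩ := h2
    rw [Finset.mem_product] at hp
    obtain ⟨w', hw'⟩ := mem_AS_head hp.1
    rw [← hvl, hw'] at hpl
    simp at hpl

lemma A_zero_col (n : ℕ) : A n 0 = 1 := by
  rw [A_eq_N]
  simpa using N_bot n

lemma A_zero (ℓ : ℕ) : A 0 ℓ = 1 := by rw [A_eq_N, N_zero]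

lemma A_one (ℓ : ℕ) : A 1 ℓ = 1 := by rw [A_eq_N, N_one]

lemma key {ℓ : ℕ} (hℓ : 1 ≤ ℓ) (m : ℕ) :
    (A (m + 2) ℓ : ℚ) = (A (m + 1) ℓ : ℚ) - A m ℓ
      + ∑ k ∈ Finset.range (m + 1), (A k (ℓ - 1) : ℚ) * A (m - k) ℓ := by
  have hL : (1 : ℤ) ≤ (ℓ : ℤ) := by exact_mod_cast hℓ
  have hcast : ((ℓ - 1 : ℕ) : ℤ) = (ℓ : ℤ) - 1 := by
    rw [Nat.cast_sub hℓ]; norm_num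
  have hrec := N_rec' (ℓ : ℤ) hL (n := m + 2) (by omega)
  rw [show m + 2 - 1 = m + 1 by omega] at hrec
  have hsum : ∑ j ∈ Finset.Icc 2 (m + 2), (AS (ℓ : ℤ) j).card * N (ℓ : ℤ) (m + 2 - j)
      = ∑ k ∈ Finset.range (m + 1),
          (N ((ℓ : ℤ) - 1) k - (if k = 0 then 1 else 0)) * N (ℓ : ℤ) (m - k) := by
    rw [← Finset.Ico_add_one_right_eq_Icc, Finset.sum_Ico_eq_sum_range,
      show m + 2 + 1 - 2 = m + 1 by omega]
    apply Finset.sum_congr rfl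
    intro k _
    rw [card_AS _ (by omega), show 2 + k - 2 = k by omega,
      show m + 2 - (2 + k) = m - k by omega]
    congr 2
    by_cases hk : k = 0
    · subst hk; simp
    · rw [if_neg (by omega), if_neg hk]
  rw [hsum] at hrec
  have hrecQ : (N (ℓ:ℤ) (m+2) : ℚ) = (N (ℓ:ℤ) (m+1) : ℚ)
      + ∑ k ∈ Finset.range (m+1),
          ((N ((ℓ:ℤ)-1) k : ℚ) - (if k = 0 then 1 else 0)) * N (ℓ:ℤ) (m-k) := by
    rw [hrec, Nat.cast_add, Nat.cast_sum]
    congr 1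
    apply Finset.sum_congr rfl
    intro k _
    rw [Nat.cast_mul]
    congr 1
    by_cases hk : k = 0
    · subst hk; simp [N_zero]
    · simp [hk]
  have hsplit : ∑ k ∈ Finset.range (m+1),
        ((N ((ℓ:ℤ)-1) k : ℚ) - (if k = 0 then 1 else 0)) * N (ℓ:ℤ) (m-k)
      = (∑ k ∈ Finset.range (m+1), (N ((ℓ:ℤ)-1) k : ℚ) * N (ℓ:ℤ) (m-k))
        - (N (ℓ:ℤ) m : ℚ) := by
    have : ∀ k ∈ Finset.range (m+1),
        ((N ((ℓ:ℤ)-1) k : ℚ) - (if k = 0 then 1 else 0)) * N (ℓ:ℤ) (m-k)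
        = (N ((ℓ:ℤ)-1) k : ℚ) * N (ℓ:ℤ) (m-k)
          - (if k = 0 then (N (ℓ:ℤ) (m-k) : ℚ) else 0) := by
      intro k _
      rw [sub_mul, ite_mul, one_mul, zero_mul]
    rw [Finset.sum_congr rfl this, Finset.sum_sub_distrib, Finset.sum_ite_eq' (Finset.range (m+1)) 0]
    simp
  simp only [A_eq_N, hcast]
  rw [hrecQ, hsplit]
  ring

theorem Agf_dummy : True := trivial

/-- `A₀(z)·(1−z) = 1`, and for every `ℓ ≥ 1` the continued-fraction-type recursion
`(1 − z + z² − z²·A_{ℓ−1}(z))·A_ℓ(z) = 1` holds in `ℚ⟦z⟧`. -/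
theorem Agf_continued_fraction_recursion :
    Agf 0 * (1 - PowerSeries.X) = 1 ∧
    ∀ ℓ : ℕ, 1 ≤ ℓ →
      (1 - PowerSeries.X + PowerSeries.X ^ 2 - PowerSeries.X ^ 2 * Agf (ℓ - 1)) * Agf ℓ = 1 := by
  constructor
  · apply PowerSeries.ext
    intro n
    have hexp : Agf 0 * (1 - PowerSeries.X) = Agf 0 - PowerSeries.X ^ 1 * Agf 0 := by ring
    rw [hexp, map_sub, PowerSeries.coeff_X_pow_mul', PowerSeries.coeff_one]
    match n with
    | 0 => norm_num [Agf, PowerSeries.coeff_mk, A_zero_col]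
    | (m + 1) =>
      rw [if_pos (by omega), if_neg (by omega)]
      simp [Agf, PowerSeries.coeff_mk, A_zero_col]
  · intro ℓ hℓ
    apply PowerSeries.ext
    intro n
    have hexp : (1 - PowerSeries.X + PowerSeries.X ^ 2 - PowerSeries.X ^ 2 * Agf (ℓ - 1)) * Agf ℓ
        = Agf ℓ - PowerSeries.X ^ 1 * Agf ℓ + PowerSeries.X ^ 2 * Agf ℓ
          - PowerSeries.X ^ 2 * (Agf (ℓ - 1) * Agf ℓ) := by ring
    rw [hexp, map_sub, map_add, map_sub, PowerSeries.coeff_X_pow_mul',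
      PowerSeries.coeff_X_pow_mul', PowerSeries.coeff_X_pow_mul', PowerSeries.coeff_one]
    match n with
    | 0 => norm_num [Agf, PowerSeries.coeff_mk, A_zero]
    | 1 =>
      rw [if_pos (by omega), if_neg (by omega), if_neg (by omega), if_neg (by omega)]
      norm_num [Agf, PowerSeries.coeff_mk, A_zero, A_one]
    | (m + 2) =>
      rw [if_pos (by omega), if_pos (by omega), if_pos (by omega), if_neg (by omega)]
      rw [show m + 2 - 1 = m + 1 by omega, show m + 2 - 2 = m by omega]
      rw [PowerSeries.coeff_mul, Finset.Nat.sum_antidiagonal_eq_sum_range_succ_mk]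
      simp only [Agf, PowerSeries.coeff_mk]
      rw [key hℓ m]
      ring
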